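/- Let d ≥ 2 and let τ = (1 d+1)(2 d+2)⋯(d 2d) ∈ S_{2d}. Let c₁ and c₂ be d-cycles in S_{2d} whose supports A = supp(c₁) and B = supp(c₂) satisfy A ∩ τ(A) = ∅ and B ∩ τ(B) = ∅ (so {1,…,2d} = A ⊔ τ(A) = B ⊔ τ(B)). Then the number of permutations α ∈ S_{2d} satisfying ατ = τα and αc₁α⁻¹ = c₂ is exactly d. -/

import Mathlib

open Fin.NatCast in
private lemma finRotate_pow_apply' {n : ℕ} (k : ℕ) (i : Fin (n + 1)) :
    ((finRotate (n + 1)) ^ k) i = i + (k : Fin (n + 1)) := by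
  induction k with
  | zero => simp
  | succ k ih =>
    rw [pow_succ', Equiv.Perm.mul_apply, ih, finRotate_succ_apply, Nat.cast_add,
      Nat.cast_one, add_assoc]

open Fin.NatCast in
private lemma finRotate_pow_self' {n : ℕ} (hn : 0 < n) : (finRotate n) ^ n = 1 := by
  obtain ⟨m, rfl⟩ := Nat.exists_eq_succ_of_ne_zero hn.ne'
  ext i
  rw [finRotate_pow_apply', Fin.natCast_self, add_zero, Equiv.Perm.one_apply]

/-- Let `d ≥ 2` and let `τ = (1 d+1)(2 d+2)⋯(d 2d) ∈ S_{2d}`, realized on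
`Fin (2d)` as `x ↦ x + d (mod 2d)`, i.e. `(finRotate (2d))^d`. If `c₁, c₂` are
`d`-cycles whose supports `A, B` satisfy `A ∩ τ(A) = ∅` and `B ∩ τ(B) = ∅`,
then the number of permutations `α ∈ S_{2d}` with `ατ = τα` and
`αc₁α⁻¹ = c₂` is exactly `d`. -/
theorem card_gluing_permutations (d : ℕ) (hd : 2 ≤ d)
    (c₁ c₂ : Equiv.Perm (Fin (2 * d)))
    (h₁ : c₁.IsCycle) (h₁' : c₁.support.card = d)
    (h₂ : c₂.IsCycle) (h₂' : c₂.support.card = d)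
    (hA : Disjoint c₁.support
      (c₁.support.image (⇑((finRotate (2 * d)) ^ d))))
    (hB : Disjoint c₂.support
      (c₂.support.image (⇑((finRotate (2 * d)) ^ d)))) :
    Nat.card {α : Equiv.Perm (Fin (2 * d)) //
        α * (finRotate (2 * d)) ^ d = (finRotate (2 * d)) ^ d * α ∧
        α * c₁ * α⁻¹ = c₂} = d := by
  classical
  have hd0 : 0 < d := by omega
  set τ : Equiv.Perm (Fin (2 * d)) := (finRotate (2 * d)) ^ d with hτdef
  -- τ is an involution
  have hτ2 : τ * τ = 1 := by
    rw [hτdef, ← pow_add]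
    have h : d + d = 2 * d := by ring
    rw [h]
    exact finRotate_pow_self' (by omega)
  have hττ : ∀ x, τ (τ x) = x := by
    intro x
    have := congrArg (fun g : Equiv.Perm (Fin (2 * d)) => g x) hτ2
    simpa [Equiv.Perm.mul_apply] using this
  have hτinv : τ⁻¹ = τ := inv_eq_of_mul_eq_one_left hτ2
  -- membership flip lemmas
  have hcover : ∀ (S : Finset (Fin (2 * d))), S.card = d → Disjoint S (S.image ⇑τ) →
      ∀ x, x ∉ S ↔ τ x ∈ S := by
    intro S hScard hdisj
    have himg : (S.image ⇑τ).card = d := by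
      rw [Finset.card_image_of_injective _ τ.injective, hScard]
    have huniv : S ∪ S.image ⇑τ = Finset.univ := by
      apply Finset.eq_univ_of_card
      rw [Finset.card_union_of_disjoint hdisj, hScard, himg, Fintype.card_fin]
      ring
    intro x
    constructor
    · intro hx
      have hx' : x ∈ S ∪ S.image ⇑τ := huniv ▸ Finset.mem_univ x
      rcases Finset.mem_union.mp hx' with h | h
      · exact absurd h hx
      · obtain ⟨a, ha, rfl⟩ := Finset.mem_image.mp h
        rw [hττ]; exact ha
    · intro hτx hx
      exact (Finset.disjoint_left.mp hdisj hτx) (Finset.mem_image_of_mem _ hx)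
  have hflipA : ∀ x, x ∉ c₁.support ↔ τ x ∈ c₁.support := hcover _ h₁' hA
  have hflipB : ∀ x, x ∉ c₂.support ↔ τ x ∈ c₂.support := hcover _ h₂' hB
  -- a conjugator
  obtain ⟨σ, hσ⟩ := isConj_iff.mp (h₁.isConj h₂ (by rw [h₁', h₂']))
  have hσmem : ∀ x, x ∈ c₁.support ↔ σ x ∈ c₂.support := by
    intro x
    rw [← hσ, Equiv.Perm.support_conj]
    simp
  have hσc : ∀ x, σ (c₁ x) = c₂ (σ x) := by
    intro x
    have h : σ * c₁ = c₂ * σ := by rw [← hσ]; group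
    calc σ (c₁ x) = (σ * c₁) x := rfl
      _ = (c₂ * σ) x := by rw [h]
      _ = c₂ (σ x) := rfl
  -- the base permutation α₀
  set f : Fin (2 * d) → Fin (2 * d) :=
    fun x => if x ∈ c₁.support then σ x else τ (σ (τ x)) with hfdef
  set g : Fin (2 * d) → Fin (2 * d) :=
    fun y => if y ∈ c₂.support then σ⁻¹ y else τ (σ⁻¹ (τ y)) with hgdef
  have hfA : ∀ x, x ∈ c₁.support → f x = σ x := fun x hx => if_pos hx
  have hfnA : ∀ x, x ∉ c₁.support → f x = τ (σ (τ x)) := fun x hx => if_neg hx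
  have hf_notB : ∀ x, x ∉ c₁.support → f x ∉ c₂.support := by
    intro x hx
    rw [hfnA x hx]
    have h3 : σ (τ x) ∈ c₂.support := (hσmem _).mp ((hflipA x).mp hx)
    exact fun hc => ((hflipB _).mpr hc) h3
  have hσmem' : ∀ y, y ∈ c₂.support ↔ σ⁻¹ y ∈ c₁.support := by
    intro y
    rw [hσmem (σ⁻¹ y), Equiv.Perm.coe_inv, Equiv.apply_symm_apply]
  have hgf : ∀ x, g (f x) = x := by
    intro x
    by_cases hx : x ∈ c₁.support
    · rw [hfA x hx, hgdef]
      simp only [(hσmem x).mp hx, if_pos, Equiv.Perm.coe_inv, Equiv.symm_apply_apply]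
    · have h3 := hf_notB x hx
      have h4 : g (f x) = τ (σ⁻¹ (τ (f x))) := if_neg h3
      rw [h4, hfnA x hx, hττ, Equiv.Perm.coe_inv, Equiv.symm_apply_apply, hττ]
  have hfg : ∀ y, f (g y) = y := by
    intro y
    by_cases hy : y ∈ c₂.support
    · have h1 : g y = σ⁻¹ y := if_pos hy
      rw [h1, hfA _ ((hσmem' y).mp hy), Equiv.Perm.coe_inv, Equiv.apply_symm_apply]
    · have h1 : g y = τ (σ⁻¹ (τ y)) := if_neg hy
      have hτy : τ y ∈ c₂.support := (hflipB y).mp hy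
      have h2 : σ⁻¹ (τ y) ∈ c₁.support := (hσmem' _).mp hτy
      have h3 : g y ∉ c₁.support := by
        rw [h1]
        exact fun hc => ((hflipA _).mpr hc) h2
      rw [hfnA _ h3, h1, hττ, Equiv.Perm.coe_inv, Equiv.apply_symm_apply, hττ]
  set α₀ : Equiv.Perm (Fin (2 * d)) := ⟨f, g, hgf, hfg⟩ with hα₀def
  have hα₀app : ∀ x, α₀ x = f x := fun _ => rfl
  have hα₀τ : α₀ * τ = τ * α₀ := by
    refine Equiv.ext fun x => ?_
    simp only [Equiv.Perm.mul_apply, hα₀app]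
    by_cases hx : x ∈ c₁.support
    · have hτx : τ x ∉ c₁.support := (hflipA (τ x)).mpr (by rw [hττ]; exact hx)
      rw [hfnA _ hτx, hfA _ hx, hττ]
    · have hτx : τ x ∈ c₁.support := (hflipA x).mp hx
      rw [hfA _ hτx, hfnA _ hx, hττ]
  have hα₀c : α₀ * c₁ * α₀⁻¹ = c₂ := by
    rw [mul_inv_eq_iff_eq_mul]
    refine Equiv.ext fun x => ?_
    simp only [Equiv.Perm.mul_apply, hα₀app]
    by_cases hx : x ∈ c₁.support
    · have h1 : c₁ x ∈ c₁.support := Equiv.Perm.apply_mem_support.mpr hx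
      rw [hfA _ h1, hfA _ hx, hσc]
    · rw [Equiv.Perm.notMem_support.mp hx]
      exact (Equiv.Perm.notMem_support.mp (hf_notB x hx)).symm
  -- the twisting permutation z
  set w : Equiv.Perm (Fin (2 * d)) := τ * c₂ * τ⁻¹ with hwdef
  have hwsupp : w.support = c₂.support.image ⇑τ := by
    rw [hwdef, Equiv.Perm.support_conj, Finset.map_eq_image]
    rfl
  have hdisjw : c₂.Disjoint w := by
    rw [Equiv.Perm.disjoint_iff_disjoint_support, hwsupp]
    exact hB
  have hcomm : Commute c₂ w := hdisjw.commute
  set z : Equiv.Perm (Fin (2 * d)) := c₂ * w with hzdef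
  have hzτ : z * τ = τ * z := by
    have h1 : τ * z * τ = w * c₂ * (τ * τ) := by rw [hzdef, hwdef, hτinv]; group
    rw [hτ2, mul_one, ← hcomm.eq, ← hzdef] at h1
    have h2 := congrArg (· * τ) h1
    beta_reduce at h2
    rw [mul_assoc (τ * z) τ τ, hτ2, mul_one] at h2
    exact h2.symm
  have hzc : Commute z c₂ := Commute.mul_left (Commute.refl c₂) hcomm.symm
  -- base point
  obtain ⟨a₀, ha₀⟩ := Finset.card_pos.mp (show 0 < c₁.support.card by omega)
  have hb₀B : σ a₀ ∈ c₂.support := (hσmem a₀).mp ha₀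
  have hzpow : ∀ k : ℤ, (z ^ k) (σ a₀) = (c₂ ^ k) (σ a₀) := by
    intro k
    rw [hzdef, hcomm.mul_zpow k, Equiv.Perm.mul_apply]
    have h2 : σ a₀ ∉ w.support := by
      rw [hwsupp]; exact Finset.disjoint_left.mp hB hb₀B
    have h3 : σ a₀ ∉ (w ^ k).support := fun hc => h2 (Equiv.Perm.support_zpow_le w k hc)
    rw [Equiv.Perm.notMem_support.mp h3]
  -- image condition for conjugators
  have hmapsto : ∀ (α : Equiv.Perm (Fin (2 * d))), α * c₁ * α⁻¹ = c₂ →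
      ∀ x, x ∈ c₁.support → α x ∈ c₂.support := by
    intro α hα x hx
    rw [← hα, Equiv.Perm.support_conj]
    simp only [Finset.mem_map, Equiv.toEmbedding_apply]
    exact ⟨x, hx, rfl⟩
  -- injectivity
  have hinj : ∀ (α β : Equiv.Perm (Fin (2 * d))),
      α * τ = τ * α → β * τ = τ * β → α * c₁ * α⁻¹ = c₂ → β * c₁ * β⁻¹ = c₂ →
      α a₀ = β a₀ → α = β := by
    intro α β hατ hβτ hαc hβc hval
    have key : ∀ x ∈ c₁.support, α x = β x := by
      intro x hx
      obtain ⟨k, hk⟩ := h₁.sameCycle (Equiv.Perm.mem_support.mp ha₀)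
        (Equiv.Perm.mem_support.mp hx)
      have e1 : ∀ (γ : Equiv.Perm (Fin (2 * d))), γ * c₁ * γ⁻¹ = c₂ →
          γ ((c₁ ^ k) a₀) = (c₂ ^ k) (γ a₀) := by
        intro γ hγ
        have h1 : γ * c₁ ^ k * γ⁻¹ = c₂ ^ k := by rw [← hγ, conj_zpow]
        have h2 : γ * c₁ ^ k = c₂ ^ k * γ := by rw [← h1]; group
        calc γ ((c₁ ^ k) a₀) = (γ * c₁ ^ k) a₀ := rfl
          _ = (c₂ ^ k * γ) a₀ := by rw [h2]
          _ = (c₂ ^ k) (γ a₀) := rfl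
      rw [← hk, e1 α hαc, e1 β hβc, hval]
    have hατ' : ∀ y, α (τ y) = τ (α y) := fun y => by
      calc α (τ y) = (α * τ) y := rfl
        _ = (τ * α) y := by rw [hατ]
        _ = τ (α y) := rfl
    have hβτ' : ∀ y, β (τ y) = τ (β y) := fun y => by
      calc β (τ y) = (β * τ) y := rfl
        _ = (τ * β) y := by rw [hβτ]
        _ = τ (β y) := rfl
    refine Equiv.ext fun x => ?_
    by_cases hx : x ∈ c₁.support
    · exact key x hx
    · have hτx : τ x ∈ c₁.support := (hflipA x).mp hx
      calc α x = α (τ (τ x)) := by rw [hττ]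
        _ = τ (α (τ x)) := hατ' (τ x)
        _ = τ (β (τ x)) := by rw [key (τ x) hτx]
        _ = β (τ (τ x)) := (hβτ' (τ x)).symm
        _ = β x := by rw [hττ]
  -- surjectivity
  have hα₀a : α₀ a₀ = σ a₀ := hfA a₀ ha₀
  have hsurj : ∀ b ∈ c₂.support, ∃ α : Equiv.Perm (Fin (2 * d)),
      (α * τ = τ * α ∧ α * c₁ * α⁻¹ = c₂) ∧ α a₀ = b := by
    intro b hb
    obtain ⟨k, hk⟩ := h₂.sameCycle (Equiv.Perm.mem_support.mp hb₀B)
      (Equiv.Perm.mem_support.mp hb)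
    have hcτ : Commute z τ := hzτ
    refine ⟨z ^ k * α₀, ⟨?_, ?_⟩, ?_⟩
    · rw [mul_assoc, hα₀τ, ← mul_assoc, (hcτ.zpow_left k).eq, mul_assoc]
    · have h1 : z ^ k * α₀ * c₁ * (z ^ k * α₀)⁻¹
          = z ^ k * (α₀ * c₁ * α₀⁻¹) * (z ^ k)⁻¹ := by group
      rw [h1, hα₀c, (hzc.zpow_left k).eq]
      group
    · calc (z ^ k * α₀) a₀ = (z ^ k) (α₀ a₀) := rfl
        _ = (z ^ k) (σ a₀) := by rw [hα₀a]
        _ = (c₂ ^ k) (σ a₀) := hzpow k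
        _ = b := hk
  -- the counting bijection
  let F : {α : Equiv.Perm (Fin (2 * d)) // α * τ = τ * α ∧ α * c₁ * α⁻¹ = c₂} →
      {y // y ∈ c₂.support} :=
    fun p => ⟨p.1 a₀, hmapsto p.1 p.2.2 a₀ ha₀⟩
  have hFbij : Function.Bijective F := by
    constructor
    · rintro ⟨α, hα1, hα2⟩ ⟨β, hβ1, hβ2⟩ h
      simp only [F, Subtype.mk.injEq] at h
      exact Subtype.ext (hinj α β hα1 hβ1 hα2 hβ2 h)
    · rintro ⟨b, hb⟩
      obtain ⟨α, hcond, hval⟩ := hsurj b hb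
      exact ⟨⟨α, hcond⟩, Subtype.ext hval⟩
  rw [Nat.card_eq_of_bijective F hFbij, Nat.card_eq_fintype_card,
    Fintype.card_coe, h₂']
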